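/- For the symmetric Dirichlet Dir(C,...,C) with C ≥ 2 on K ≥ 2 classes, the aleatoric uncertainty (1/ln K)·Σ_{k=C+1}^{CK} 1/k is strictly greater than the vacuity 1/C. -/

import Mathlib

open Finset

theorem aleatoric_gt_vacuity_symmetric (C K : ℕ) (hC : 2 ≤ C) (hK : 2 ≤ K) :
    (1 / Real.log K) * ∑ k ∈ Finset.Icc (C + 1) (C * K), (1 : ℝ) / k >
      1 / (C : ℝ) := by
  have hC' : (2:ℝ) ≤ (C:ℝ) := by exact_mod_cast hC
  have hK' : (2:ℝ) ≤ (K:ℝ) := by exact_mod_cast hK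
  have hC0 : (0:ℝ) < C := by linarith
  have hlogK : 0 < Real.log K := Real.log_pos (by linarith)
  have hle : C + 1 ≤ C * K := by nlinarith [Nat.mul_le_mul_left C hK]
  -- strict termwise bound: log (k+1) - log k < 1/k
  have hsum : ∑ k ∈ Finset.Icc (C + 1) (C * K),
      (Real.log ((k:ℝ)+1) - Real.log (k:ℝ)) <
      ∑ k ∈ Finset.Icc (C + 1) (C * K), (1 : ℝ) / k := by
    apply Finset.sum_lt_sum_of_nonempty
    · exact Finset.nonempty_Icc.mpr hle
    · intro k hk
      have hk1 : C + 1 ≤ k := (Finset.mem_Icc.mp hk).1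
      have hkpos : (0:ℝ) < k := by
        have : 0 < k := by omega
        exact_mod_cast this
      have hx : Real.log (((k:ℝ)+1)/k) < ((k:ℝ)+1)/k - 1 := by
        apply Real.log_lt_sub_one_of_pos (by positivity)
        intro h
        rw [div_eq_one_iff_eq (ne_of_gt hkpos)] at h
        linarith
      have h1 : Real.log (((k:ℝ)+1)/k) = Real.log ((k:ℝ)+1) - Real.log k :=
        Real.log_div (by positivity) (ne_of_gt hkpos)
      have h2 : ((k:ℝ)+1)/k - 1 = 1/k := by field_simp; ring
      rw [h1, h2] at hx
      exact hx
  -- telescoping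
  have htel : ∑ k ∈ Finset.Icc (C + 1) (C * K),
      (Real.log ((k:ℝ)+1) - Real.log (k:ℝ)) =
      Real.log ((C:ℝ)*K+1) - Real.log ((C:ℝ)+1) := by
    rw [← Finset.Ico_add_one_right_eq_Icc, Finset.sum_Ico_eq_sum_range]
    have hn : C * K + 1 - (C + 1) = C * K - C := by omega
    rw [hn]
    have key : ∀ i ∈ Finset.range (C * K - C),
        (Real.log (((C + 1 + i : ℕ):ℝ)+1) - Real.log ((C + 1 + i : ℕ):ℝ)) =
        (fun j : ℕ => Real.log ((C:ℝ)+1+(j:ℕ))) (i+1) - (fun j : ℕ => Real.log ((C:ℝ)+1+(j:ℕ))) i := by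
      intro i _
      simp only
      push_cast
      ring_nf
    rw [Finset.sum_congr rfl key, Finset.sum_range_sub (fun j : ℕ => Real.log ((C:ℝ)+1+(j:ℕ)))]
    have hcast : ((C * K - C : ℕ):ℝ) = (C:ℝ)*K - C := by
      have : C ≤ C * K := by nlinarith [Nat.mul_le_mul_left C hK]
      push_cast [Nat.cast_sub this]
      ring
    simp only [hcast]
    norm_num
    ring_nf
  -- power inequality: K * (C+1)^C ≤ (C*K+1)^C
  have hpow : (K:ℝ) * ((C:ℝ)+1)^C ≤ ((C:ℝ)*K+1)^C := by
    have h1 : ((C:ℝ)+1) * ((2*K+1)/3) ≤ (C:ℝ)*K+1 := by nlinarith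
    have h2 : (1:ℝ) ≤ (2*(K:ℝ)+1)/3 := by linarith
    have h3 : ((2*(K:ℝ)+1)/3)^2 ≤ ((2*(K:ℝ)+1)/3)^C := pow_le_pow_right₀ h2 hC
    have h4 : (K:ℝ) ≤ ((2*(K:ℝ)+1)/3)^2 := by nlinarith
    calc (K:ℝ) * ((C:ℝ)+1)^C ≤ ((2*(K:ℝ)+1)/3)^2 * ((C:ℝ)+1)^C := by
          apply mul_le_mul_of_nonneg_right h4 (by positivity)
      _ ≤ ((2*(K:ℝ)+1)/3)^C * ((C:ℝ)+1)^C := by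
          apply mul_le_mul_of_nonneg_right h3 (by positivity)
      _ = (((C:ℝ)+1) * ((2*(K:ℝ)+1)/3))^C := by rw [mul_pow]; ring
      _ ≤ ((C:ℝ)*K+1)^C := by
          apply pow_le_pow_left₀ (by positivity) h1
  -- log inequality
  have hlog : Real.log K / C ≤ Real.log ((C:ℝ)*K+1) - Real.log ((C:ℝ)+1) := by
    have h1 : Real.log ((K:ℝ) * ((C:ℝ)+1)^C) ≤ Real.log (((C:ℝ)*K+1)^C) :=
      Real.log_le_log (by positivity) hpow
    rw [Real.log_mul (by linarith) (by positivity), Real.log_pow, Real.log_pow] at h1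
    rw [div_le_iff₀ hC0]
    nlinarith
  -- combine
  have hS : Real.log K / C < ∑ k ∈ Finset.Icc (C + 1) (C * K), (1 : ℝ) / k := by
    calc Real.log K / C ≤ Real.log ((C:ℝ)*K+1) - Real.log ((C:ℝ)+1) := hlog
      _ = ∑ k ∈ Finset.Icc (C + 1) (C * K),
          (Real.log ((k:ℝ)+1) - Real.log (k:ℝ)) := htel.symm
      _ < _ := hsum
  have := mul_lt_mul_of_pos_left hS (by positivity : (0:ℝ) < 1 / Real.log K)
  calc (1:ℝ) / C = 1 / Real.log K * (Real.log K / C) := by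
        field_simp
    _ < _ := this
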